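/- Let X be a set with |X| > 1 and k a field. Then every countably generated left module over the free associative algebra k⟨X⟩ can be embedded into a cyclic k⟨X⟩-module. -/

import Mathlib

private lemma replicate_aux {α : Type*} {x y : α} (hxy : y ≠ x) :
    ∀ (i j : ℕ) (a b : List α),
      List.replicate i x ++ y :: a = List.replicate j x ++ y :: b → i = j := by
  intro i
  induction i with
  | zero =>
    intro j a b h
    cases j with
    | zero => rfl
    | succ j => simp [List.replicate_succ] at h; exact absurd h.1 hxy
  | succ n ih =>
    intro j a b h
    cases j with
    | zero => simp [List.replicate_succ] at h; exact absurd h.1.symm hxy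
    | succ j =>
      simp only [List.replicate_succ, List.cons_append, List.cons.injEq] at h
      exact congrArg Nat.succ (ih j a b h.2)

private lemma word_aux {α : Type*} {x y : α} (hxy : y ≠ x) (i j : ℕ) (p q : List α)
    (h : p ++ y :: List.replicate i x = q ++ y :: List.replicate j x) : i = j := by
  have h' := congrArg List.reverse h
  simp only [List.reverse_append, List.reverse_cons, List.reverse_replicate,
    List.append_assoc, List.singleton_append] at h'
  exact replicate_aux hxy i j _ _ h'

private lemma toList_of_pow {X : Type*} (x : X) (i : ℕ) :
    FreeMonoid.toList (FreeMonoid.of x ^ i) = List.replicate i x := by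
  induction i with
  | zero => rfl
  | succ n ih => rw [pow_succ, FreeMonoid.toList_mul, ih, FreeMonoid.toList_of,
      List.replicate_succ']

private lemma freemonoid_aux {X : Type*} {x y : X} (hxy : x ≠ y) (i j : ℕ)
    (p q : FreeMonoid X)
    (h : p * (FreeMonoid.of y * FreeMonoid.of x ^ i)
        = q * (FreeMonoid.of y * FreeMonoid.of x ^ j)) : i = j := by
  have h' := congrArg FreeMonoid.toList h
  simp only [FreeMonoid.toList_mul, FreeMonoid.toList_of, toList_of_pow,
    List.singleton_append] at h'
  exact word_aux (fun hyx => hxy hyx.symm) i j _ _ h'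

private lemma key_indep {k X : Type} [Field k] {x y : X} (hxy : x ≠ y)
    (c : ℕ →₀ FreeAlgebra k X)
    (h : (c.sum fun i a => a * (FreeAlgebra.ι k y * FreeAlgebra.ι k x ^ i)) = 0) :
    c = 0 := by
  classical
  set e := FreeAlgebra.equivMonoidAlgebraFreeMonoid (R := k) (X := X) with he
  set u : ℕ → FreeMonoid X := fun i => FreeMonoid.of y * FreeMonoid.of x ^ i with hu
  have hw : ∀ i, e (FreeAlgebra.ι k y * FreeAlgebra.ι k x ^ i)
      = MonoidAlgebra.single (u i) 1 := by
    intro i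
    rw [map_mul, map_pow]
    have hz : ∀ z : X, e (FreeAlgebra.ι k z) = MonoidAlgebra.single (FreeMonoid.of z) 1 := by
      intro z
      simp [he, FreeAlgebra.equivMonoidAlgebraFreeMonoid]
    rw [hz, hz, MonoidAlgebra.single_pow, MonoidAlgebra.single_mul_single, one_pow, one_mul]
  have h2 : (∑ j ∈ c.support, (e (c j)) * MonoidAlgebra.single (u j) (1 : k)) = 0 := by
    have h1 := congrArg e h
    rw [map_finsuppSum] at h1
    simpa [Finsupp.sum, map_mul, hw] using h1
  ext i
  simp only [Finsupp.coe_zero, Pi.zero_apply]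
  by_cases hi : i ∈ c.support
  · have hvals : ∀ p : FreeMonoid X, (e (c i)).coeff p = 0 := by
      intro p
      have h3 : (∑ j ∈ c.support, (e (c j)) * MonoidAlgebra.single (u j) (1 : k)).coeff
          (p * u i) = 0 := by rw [h2]; rfl
      rw [MonoidAlgebra.coeff_sum, Finset.sum_apply'] at h3
      have hterm : ∀ j ∈ c.support,
          ((e (c j)) * MonoidAlgebra.single (u j) (1 : k)).coeff (p * u i)
            = if j = i then (e (c i)).coeff p else 0 := by
        intro j _
        by_cases hji : j = i
        · subst hji
          rw [if_pos rfl]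
          have := MonoidAlgebra.coeff_mul_single_eq_coeff_mul (x := e (c j))
            (r := (1 : k)) (m := u j) (m₁ := p * u j) p
            (fun a _ => mul_left_inj (u j))
          rw [this, mul_one]
        · rw [if_neg hji]
          refine MonoidAlgebra.mul_single_apply_of_not_exists_mul _ _ ?_
          rintro ⟨d, hd⟩
          exact hji (freemonoid_aux hxy j i d p hd.symm)
      rw [Finset.sum_congr rfl hterm, Finset.sum_ite_eq' c.support i
        (fun _ => (e (c i)).coeff p), if_pos hi] at h3
      exact h3
    have : e (c i) = 0 := MonoidAlgebra.coeff_injective (Finsupp.ext (g := MonoidAlgebra.coeff 0) hvals)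
    have := e.injective (by simpa using this)
    exact this
  · exact Finsupp.notMem_support_iff.mp hi

/-- Let `X` be a set with more than one element and `k` a field. Every
countably generated left module over the free associative algebra `k⟨X⟩` can
be embedded into a cyclic `k⟨X⟩`-module. -/
theorem countably_generated_module_embeds_into_cyclic
    (k : Type) [Field k] (X : Type) (hX : ∃ x y : X, x ≠ y)
    (M : Type) [AddCommGroup M] [Module (FreeAlgebra k X) M]
    (hM : ∃ S : Set M, S.Countable ∧ Submodule.span (FreeAlgebra k X) S = ⊤) :
    ∃ (N : Type) (_ : AddCommGroup N) (_ : Module (FreeAlgebra k X) N)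
      (f : M →ₗ[FreeAlgebra k X] N),
      Function.Injective f ∧
      ∃ y : N, Submodule.span (FreeAlgebra k X) ({y} : Set N) = ⊤ := by
  classical
  obtain ⟨x, y, hxy⟩ := hX
  obtain ⟨S, hSc, hSspan⟩ := hM
  set R := FreeAlgebra k X with hR
  -- enumerate a countable generating family
  obtain ⟨g, hg⟩ := (hSc.insert 0).exists_eq_range ⟨0, Set.mem_insert 0 S⟩
  have hgspan : Submodule.span R (Set.range g) = ⊤ := by
    rw [← hg, Submodule.span_insert_zero, hSspan]
  set w : ℕ → R := fun i => FreeAlgebra.ι k y * FreeAlgebra.ι k x ^ i with hwdef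
  set v : ℕ → M × R := fun i => (g i, -(w i)) with hvdef
  set L : Submodule R (M × R) := Submodule.span R (Set.range v) with hLdef
  refine ⟨(M × R) ⧸ L, inferInstance, inferInstance,
    L.mkQ.comp (LinearMap.inl R M R), ?_, ?_⟩
  · -- injectivity
    rw [← LinearMap.ker_eq_bot, eq_bot_iff]
    intro m hm
    have hmem : ((m : M), (0 : R)) ∈ L := by
      have : L.mkQ (m, (0 : R)) = 0 := hm
      rwa [Submodule.mkQ_apply, Submodule.Quotient.mk_eq_zero] at this
    rw [hLdef, Finsupp.mem_span_range_iff_exists_finsupp] at hmem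
    obtain ⟨c, hc⟩ := hmem
    have hsnd : (c.sum fun i a => a * w i) = 0 := by
      have h2 := congrArg Prod.snd hc
      simp only [Finsupp.sum, Prod.snd_sum, hvdef, Prod.smul_mk, Prod.snd] at h2
      have : (∑ i ∈ c.support, -(c i * w i)) = 0 := by
        rw [← h2]; exact Finset.sum_congr rfl (fun i _ => (mul_neg _ _).symm)
      rw [Finset.sum_neg_distrib, neg_eq_zero] at this
      simpa [Finsupp.sum] using this
    have hc0 : c = 0 := key_indep hxy c hsnd
    have hfst := congrArg Prod.fst hc
    rw [hc0] at hfst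
    simp only [Finsupp.sum_zero_index] at hfst
    simpa [Prod.fst] using hfst.symm
  · -- cyclicity
    refine ⟨L.mkQ ((0 : M), (1 : R)), ?_⟩
    have htop : Submodule.span R (Set.range v ∪ {((0 : M), (1 : R))}) = ⊤ := by
      rw [eq_top_iff]
      rintro ⟨m, r⟩ -
      have hone : ((0 : M), (1 : R)) ∈ Submodule.span R
          (Set.range v ∪ {((0 : M), (1 : R))}) :=
        Submodule.subset_span (Or.inr rfl)
      have hmem0 : ∀ m : M, ((m : M), (0 : R)) ∈ Submodule.span R
          (Set.range v ∪ {((0 : M), (1 : R))}) := by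
        intro m
        have hm : m ∈ Submodule.span R (Set.range g) := by rw [hgspan]; trivial
        refine Submodule.span_induction
          (p := fun z _ => ((z : M), (0 : R)) ∈ Submodule.span R
            (Set.range v ∪ {((0 : M), (1 : R))})) ?_ ?_ ?_ ?_ hm
        · rintro z ⟨i, rfl⟩
          have heq : ((g i : M), (0 : R)) = v i + w i • ((0 : M), (1 : R)) := by
            simp [hvdef, Prod.ext_iff, smul_eq_mul]
          rw [heq]
          exact add_mem (Submodule.subset_span (Or.inl ⟨i, rfl⟩))
            (Submodule.smul_mem _ _ hone)
        · exact (Submodule.span R (Set.range v ∪ {((0 : M), (1 : R))})).zero_mem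
        · intro a b _ _ ha hb
          have : ((a + b : M), (0 : R)) = ((a : M), (0 : R)) + ((b : M), (0 : R)) := by
            simp
          rw [this]; exact add_mem ha hb
        · intro a z _ hz
          have : ((a • z : M), (0 : R)) = a • ((z : M), (0 : R)) := by simp
          rw [this]; exact Submodule.smul_mem _ _ hz
      have hsplit : ((m : M), (r : R)) = ((m : M), (0 : R)) + r • ((0 : M), (1 : R)) := by
        simp [Prod.ext_iff, smul_eq_mul]
      rw [hsplit]
      exact add_mem (hmem0 m) (Submodule.smul_mem _ _ hone)
    have himg : Submodule.span R (L.mkQ '' (Set.range v ∪ {((0 : M), (1 : R))})) = ⊤ := by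
      rw [Submodule.span_image, htop, Submodule.map_top, Submodule.range_mkQ]
    rw [eq_top_iff, ← himg, Submodule.span_le]
    rintro z ⟨a, ha, rfl⟩
    rcases ha with ⟨i, rfl⟩ | rfl
    · have hvL : v i ∈ L := Submodule.subset_span ⟨i, rfl⟩
      have : L.mkQ (v i) = 0 := by
        rw [Submodule.mkQ_apply, Submodule.Quotient.mk_eq_zero]; exact hvL
      rw [this]
      exact (Submodule.span R _).zero_mem
    · exact Submodule.subset_span rfl
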